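/- arXiv:2307.15586 — 7 statements merged into one kernel-verified Lean document; each statement's English description precedes it below -/
import Mathlib

section
/- With n = 2 agents, the average outcome x_j = (s_{1,j}+s_{2,j})/2 maximizes the egalitarian welfare: for every outcome x' ∈ Δ^m, max(d_1(x'), d_2(x')) ≥ max(d_1(x), d_2(x)), where d_i(y) = Σ_j |s_{i,j} − y_j|. -/
def simplex {m : ℕ} (x : Fin m → ℝ) : Prop :=
  (∀ j, 0 ≤ x j) ∧ ∑ j, x j = 1

theorem avg_maximizes_egalitarian (m : ℕ) (s₁ s₂ x' : Fin m → ℝ)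
    (hs₁ : simplex s₁) (hs₂ : simplex s₂) (hx' : simplex x') :
    max (∑ j, |s₁ j - ((s₁ j + s₂ j) / 2)|) (∑ j, |s₂ j - ((s₁ j + s₂ j) / 2)|)
      ≤ max (∑ j, |s₁ j - x' j|) (∑ j, |s₂ j - x' j|) := by
  have h1 : ∑ j, |s₁ j - ((s₁ j + s₂ j) / 2)| = (∑ j, |s₁ j - s₂ j|) / 2 := by
    rw [Finset.sum_div]
    refine Finset.sum_congr rfl fun j _ => ?_
    have : s₁ j - (s₁ j + s₂ j) / 2 = (s₁ j - s₂ j) / 2 := by ring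
    rw [this, abs_div, abs_two]
  have h2 : ∑ j, |s₂ j - ((s₁ j + s₂ j) / 2)| = (∑ j, |s₁ j - s₂ j|) / 2 := by
    rw [Finset.sum_div]
    refine Finset.sum_congr rfl fun j _ => ?_
    have : s₂ j - (s₁ j + s₂ j) / 2 = -((s₁ j - s₂ j) / 2) := by ring
    rw [this, abs_neg, abs_div, abs_two]
  rw [h1, h2, max_self]
  have htri : ∑ j, |s₁ j - s₂ j| ≤ (∑ j, |s₁ j - x' j|) + (∑ j, |s₂ j - x' j|) := by
    rw [← Finset.sum_add_distrib]
    refine Finset.sum_le_sum fun j _ => ?_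
    calc |s₁ j - s₂ j| = |(s₁ j - x' j) + (x' j - s₂ j)| := by ring_nf
      _ ≤ |s₁ j - x' j| + |x' j - s₂ j| := abs_add_le _ _
      _ = |s₁ j - x' j| + |s₂ j - x' j| := by rw [abs_sub_comm (x' j)]
  have hmax : (∑ j, |s₁ j - x' j|) + (∑ j, |s₂ j - x' j|)
      ≤ 2 * max (∑ j, |s₁ j - x' j|) (∑ j, |s₂ j - x' j|) := by
    rw [two_mul]
    exact add_le_add (le_max_left _ _) (le_max_right _ _)
  linarith
end

section
/- Pareto optimality implies range-respect: if an outcome x ∈ Δ^m for an instance (s_1,…,s_n) is not range-respecting (i.e., there exists j with x_j > max_i s_{i,j} or x_j < min_i s_{i,j}), then x is Pareto dominated by some outcome x' ∈ Δ^m (d_i(x') ≤ d_i(x) for all i, with strict inequality for some i). -/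
lemma split_sum {m : ℕ} (a b : Fin m) (hab : a ≠ b) (f : Fin m → ℝ) :
    ∑ l, f l = (∑ l ∈ Finset.univ \ {a, b}, f l) + (f a + f b) := by
  rw [← Finset.sum_sdiff (Finset.subset_univ ({a, b} : Finset (Fin m))),
    Finset.sum_pair hab]

lemma aux_move {n m : ℕ} (s : Fin n → Fin m → ℝ) (hs : ∀ i, simplex (s i))
    (x : Fin m → ℝ) (hx : simplex x) (a b : Fin m) (hab : a ≠ b)
    (ε : ℝ) (hε : 0 < ε) (h0 : 0 ≤ x a - ε)
    (hle : ∀ i, |s i a - (x a - ε)| + |s i b - (x b + ε)| ≤ |s i a - x a| + |s i b - x b|)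
    (hlt : ∃ i, |s i a - (x a - ε)| + |s i b - (x b + ε)| < |s i a - x a| + |s i b - x b|) :
    ∃ x' : Fin m → ℝ, simplex x' ∧
      (∀ i, ∑ j, |s i j - x' j| ≤ ∑ j, |s i j - x j|) ∧
      (∃ i, ∑ j, |s i j - x' j| < ∑ j, |s i j - x j|) := by
  set x' : Fin m → ℝ := fun l => if l = a then x a - ε else if l = b then x b + ε else x l
    with hx'def
  have hx'a : x' a = x a - ε := by simp [hx'def]
  have hx'b : x' b = x b + ε := by simp [hx'def, hab.symm]
  have hx'other : ∀ l, l ≠ a → l ≠ b → x' l = x l := by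
    intro l h1 h2; simp [hx'def, h1, h2]
  have hsumother : ∀ (f g : Fin m → ℝ), (∀ l, l ≠ a → l ≠ b → f l = g l) →
      ∑ l ∈ Finset.univ \ {a, b}, f l = ∑ l ∈ Finset.univ \ {a, b}, g l := by
    intro f g h
    apply Finset.sum_congr rfl
    intro l hl
    simp only [Finset.mem_sdiff, Finset.mem_insert, Finset.mem_singleton] at hl
    exact h l (fun hc => hl.2 (Or.inl hc)) (fun hc => hl.2 (Or.inr hc))
  have hdist : ∀ i, ∑ j, |s i j - x' j| =
      (∑ l ∈ Finset.univ \ {a, b}, |s i l - x l|) + (|s i a - (x a - ε)| + |s i b - (x b + ε)|) := by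
    intro i
    rw [split_sum a b hab, hx'a, hx'b]
    congr 1
    exact hsumother _ _ (fun l h1 h2 => by rw [hx'other l h1 h2])
  have hdist' : ∀ i, ∑ j, |s i j - x j| =
      (∑ l ∈ Finset.univ \ {a, b}, |s i l - x l|) + (|s i a - x a| + |s i b - x b|) :=
    fun i => split_sum a b hab _
  refine ⟨x', ⟨?_, ?_⟩, ?_, ?_⟩
  · intro l
    by_cases h1 : l = a
    · subst h1; rw [hx'a]; exact h0
    by_cases h2 : l = b
    · subst h2; rw [hx'b]; have := hx.1 l; linarith
    · rw [hx'other l h1 h2]; exact hx.1 l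
  · have e1 : ∑ l, x' l = (∑ l ∈ Finset.univ \ {a, b}, x l) + ((x a - ε) + (x b + ε)) := by
      rw [split_sum a b hab, hx'a, hx'b]
      congr 1
      exact hsumother _ _ hx'other
    have e2 : ∑ l, x l = (∑ l ∈ Finset.univ \ {a, b}, x l) + (x a + x b) :=
      split_sum a b hab x
    have := hx.2
    rw [e1]; rw [e2] at this; linarith
  · intro i
    rw [hdist i, hdist' i]
    have := hle i
    linarith
  · obtain ⟨i, hi⟩ := hlt
    refine ⟨i, ?_⟩
    rw [hdist i, hdist' i]
    linarith

theorem pareto_implies_range_respect (n m : ℕ) (hn : 1 ≤ n)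
    (s : Fin n → Fin m → ℝ) (hs : ∀ i, simplex (s i))
    (x : Fin m → ℝ) (hx : simplex x)
    (hnotRR : ∃ j, (∀ i, s i j < x j) ∨ (∀ i, x j < s i j)) :
    ∃ x' : Fin m → ℝ, simplex x' ∧
      (∀ i, ∑ j, |s i j - x' j| ≤ ∑ j, |s i j - x j|) ∧
      (∃ i, ∑ j, |s i j - x' j| < ∑ j, |s i j - x j|) := by
  obtain ⟨j, hj⟩ := hnotRR
  have i0 : Fin n := ⟨0, hn⟩
  haveI : Nonempty (Fin n) := ⟨i0⟩
  have hne : (Finset.univ : Finset (Fin n)).Nonempty := Finset.univ_nonempty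
  rcases hj with hj | hj
  · -- x j too large: decrease at j, increase at some k with x k < s i0 k
    have hk : ∃ k, x k < s i0 k := by
      by_contra h
      push_neg at h
      have : ∑ l, s i0 l < ∑ l, x l :=
        Finset.sum_lt_sum (fun l _ => h l) ⟨j, Finset.mem_univ j, hj i0⟩
      rw [(hs i0).2, hx.2] at this
      exact lt_irrefl _ this
    obtain ⟨k, hk⟩ := hk
    have hkj : k ≠ j := fun h => by rw [h] at hk; exact absurd (hj i0) (by linarith)
    set M := Finset.univ.sup' hne (fun i => s i j) with hM
    have hMlt : M < x j := (Finset.sup'_lt_iff hne).mpr (fun i _ => hj i)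
    have hMge : ∀ i, s i j ≤ M := fun i => Finset.le_sup' (fun i => s i j) (Finset.mem_univ i)
    set ε : ℝ := min (x j - M) (s i0 k - x k) with hεdef
    have hε : 0 < ε := lt_min (by linarith) (by linarith)
    have hεj : ∀ i, s i j ≤ x j - ε := by
      intro i
      have h1 : ε ≤ x j - M := min_le_left _ _
      have := hMge i; linarith
    have hεk : x k + ε ≤ s i0 k := by
      have := min_le_right (x j - M) (s i0 k - x k); linarith
    apply aux_move s hs x hx j k (Ne.symm hkj) ε hε
    · have := (hs i0).1 j; have := hεj i0; linarith
    · intro i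
      have e1 : |s i j - (x j - ε)| = (x j - ε) - s i j := by
        rw [abs_of_nonpos (by have := hεj i; linarith)]; ring
      have e2 : |s i j - x j| = x j - s i j := by
        rw [abs_of_nonpos (by have := hj i; linarith)]; ring
      have tri : |s i k - (x k + ε)| ≤ |s i k - x k| + ε := by
        have h1 : s i k - (x k + ε) = (s i k - x k) + (-ε) := by ring
        rw [h1]
        calc |(s i k - x k) + -ε| ≤ |s i k - x k| + |-ε| := abs_add_le _ _
          _ = |s i k - x k| + ε := by rw [abs_neg, abs_of_pos hε]
      linarith
    · refine ⟨i0, ?_⟩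
      have e1 : |s i0 j - (x j - ε)| = (x j - ε) - s i0 j := by
        rw [abs_of_nonpos (by have := hεj i0; linarith)]; ring
      have e2 : |s i0 j - x j| = x j - s i0 j := by
        rw [abs_of_nonpos (by have := hj i0; linarith)]; ring
      have e3 : |s i0 k - (x k + ε)| = s i0 k - (x k + ε) := by
        rw [abs_of_nonneg (by linarith)]
      have e4 : |s i0 k - x k| = s i0 k - x k := by
        rw [abs_of_nonneg (by linarith)]
      rw [e1, e2, e3, e4]; linarith
  · -- x j too small: increase at j, decrease at some k with s i0 k < x k
    have hk : ∃ k, s i0 k < x k := by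
      by_contra h
      push_neg at h
      have : ∑ l, x l < ∑ l, s i0 l :=
        Finset.sum_lt_sum (fun l _ => h l) ⟨j, Finset.mem_univ j, hj i0⟩
      rw [(hs i0).2, hx.2] at this
      exact lt_irrefl _ this
    obtain ⟨k, hk⟩ := hk
    have hkj : k ≠ j := fun h => by rw [h] at hk; exact absurd (hj i0) (by linarith)
    set M := Finset.univ.inf' hne (fun i => s i j) with hM
    have hMgt : x j < M := (Finset.lt_inf'_iff hne).mpr (fun i _ => hj i)
    have hMle : ∀ i, M ≤ s i j := fun i => Finset.inf'_le (fun i => s i j) (Finset.mem_univ i)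
    set ε : ℝ := min (M - x j) (x k - s i0 k) with hεdef
    have hε : 0 < ε := lt_min (by linarith) (by linarith)
    have hεj : ∀ i, x j + ε ≤ s i j := by
      intro i
      have h1 : ε ≤ M - x j := min_le_left _ _
      have := hMle i; linarith
    have hεk : s i0 k ≤ x k - ε := by
      have := min_le_right (M - x j) (x k - s i0 k); linarith
    apply aux_move s hs x hx k j hkj ε hε
    · have := (hs i0).1 k; linarith
    · intro i
      have e1 : |s i j - (x j + ε)| = s i j - (x j + ε) := by
        rw [abs_of_nonneg (by have := hεj i; linarith)]
      have e2 : |s i j - x j| = s i j - x j := by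
        rw [abs_of_nonneg (by have := hj i; linarith)]
      have tri : |s i k - (x k - ε)| ≤ |s i k - x k| + ε := by
        have h1 : s i k - (x k - ε) = (s i k - x k) + ε := by ring
        rw [h1]
        calc |(s i k - x k) + ε| ≤ |s i k - x k| + |ε| := abs_add_le _ _
          _ = |s i k - x k| + ε := by rw [abs_of_pos hε]
      linarith
    · refine ⟨i0, ?_⟩
      have e1 : |s i0 j - (x j + ε)| = s i0 j - (x j + ε) := by
        rw [abs_of_nonneg (by have := hεj i0; linarith)]
      have e2 : |s i0 j - x j| = s i0 j - x j := by
        rw [abs_of_nonneg (by have := hj i0; linarith)]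
      have e3 : |s i0 k - (x k - ε)| = (x k - ε) - s i0 k := by
        rw [abs_of_nonpos (by linarith)]; ring
      have e4 : |s i0 k - x k| = x k - s i0 k := by
        rw [abs_of_nonpos (by linarith)]; ring
      rw [e1, e2, e3, e4]; linarith
end

section
/- With n = 2 agents, every range-respecting outcome is Pareto optimal: if min(s_{1,j},s_{2,j}) ≤ x_j ≤ max(s_{1,j},s_{2,j}) for all j, then no outcome x' ∈ Δ^m satisfies d_i(x') ≤ d_i(x) for both i with strict inequality for some i. -/
theorem range_respect_implies_pareto_two_agents (m : ℕ)
    (s₁ s₂ : Fin m → ℝ) (hs₁ : simplex s₁) (hs₂ : simplex s₂)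
    (x : Fin m → ℝ) (hx : simplex x)
    (hRR : ∀ j, min (s₁ j) (s₂ j) ≤ x j ∧ x j ≤ max (s₁ j) (s₂ j)) :
    ¬ ∃ x' : Fin m → ℝ, simplex x' ∧
        (∑ j, |s₁ j - x' j| ≤ ∑ j, |s₁ j - x j|) ∧
        (∑ j, |s₂ j - x' j| ≤ ∑ j, |s₂ j - x j|) ∧
        ((∑ j, |s₁ j - x' j| < ∑ j, |s₁ j - x j|) ∨
         (∑ j, |s₂ j - x' j| < ∑ j, |s₂ j - x j|)) := by
  rintro ⟨x', hx', h1, h2, hstrict⟩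
  have key : ∀ j, |s₁ j - x j| + |s₂ j - x j| = |s₁ j - s₂ j| := by
    intro j
    obtain ⟨hlo, hhi⟩ := hRR j
    rcases le_total (s₁ j) (s₂ j) with h | h
    · rw [min_eq_left h] at hlo; rw [max_eq_right h] at hhi
      rw [abs_of_nonpos (by linarith), abs_of_nonneg (by linarith),
        abs_of_nonpos (by linarith)]; ring
    · rw [min_eq_right h] at hlo; rw [max_eq_left h] at hhi
      rw [abs_of_nonneg (by linarith), abs_of_nonpos (by linarith),
        abs_of_nonneg (by linarith)]; ring
  have tri : ∀ j, |s₁ j - s₂ j| ≤ |s₁ j - x' j| + |s₂ j - x' j| := by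
    intro j
    calc |s₁ j - s₂ j| = |(s₁ j - x' j) - (s₂ j - x' j)| := by ring_nf
      _ ≤ |s₁ j - x' j| + |s₂ j - x' j| := abs_sub _ _
  have hsum : ∑ j, |s₁ j - x j| + ∑ j, |s₂ j - x j|
      ≤ ∑ j, |s₁ j - x' j| + ∑ j, |s₂ j - x' j| := by
    rw [← Finset.sum_add_distrib, ← Finset.sum_add_distrib]
    apply Finset.sum_le_sum
    intro j _
    rw [key j]; exact tri j
  rcases hstrict with h | h <;> linarith
end

section
/- With m = 2 candidates, every range-respecting outcome is Pareto optimal: if x ∈ Δ^2 satisfies min_i s_{i,j} ≤ x_j ≤ max_i s_{i,j} for j = 1,2, then for every x' ∈ Δ^2 with x' ≠ x there exists an agent i with d_i(x) < d_i(x'). -/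
theorem range_respect_implies_pareto_two_candidates (n : ℕ) (hn : 1 ≤ n)
    (s : Fin n → Fin 2 → ℝ) (hs : ∀ i, simplex (s i))
    (x : Fin 2 → ℝ) (hx : simplex x)
    (hRR : ∀ j, (∃ i, s i j ≤ x j) ∧ (∃ i, x j ≤ s i j)) :
    ∀ x' : Fin 2 → ℝ, simplex x' → x' ≠ x →
      ∃ i, ∑ j, |s i j - x j| < ∑ j, |s i j - x' j| := by
  intro x' hx' hne
  have hxs : x 0 + x 1 = 1 := by simpa [Fin.sum_univ_two] using hx.2
  have hx's : x' 0 + x' 1 = 1 := by simpa [Fin.sum_univ_two] using hx'.2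
  have hne0 : x' 0 ≠ x 0 := by
    intro h
    apply hne
    funext j
    fin_cases j
    · exact h
    · show x' 1 = x 1; linarith
  have key : ∀ i (y y' : Fin 2 → ℝ), y 0 + y 1 = 1 → y' 0 + y' 1 = 1 →
      |s i 0 - y 0| < |s i 0 - y' 0| →
      ∑ j, |s i j - y j| < ∑ j, |s i j - y' j| := by
    intro i y y' hy hy' h
    have hsi : s i 0 + s i 1 = 1 := by simpa [Fin.sum_univ_two] using (hs i).2
    have e1 : |s i 1 - y 1| = |s i 0 - y 0| := by
      rw [show s i 1 - y 1 = -(s i 0 - y 0) by linarith, abs_neg]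
    have e2 : |s i 1 - y' 1| = |s i 0 - y' 0| := by
      rw [show s i 1 - y' 1 = -(s i 0 - y' 0) by linarith, abs_neg]
    simp only [Fin.sum_univ_two, e1, e2]
    linarith
  rcases lt_or_gt_of_ne hne0 with h | h
  · -- x' 0 < x 0 : pick i with x 0 ≤ s i 0
    obtain ⟨i, hi⟩ := (hRR 0).2
    refine ⟨i, key i x x' hxs hx's ?_⟩
    rw [abs_of_nonneg (by linarith), abs_of_nonneg (by linarith)]
    linarith
  · -- x 0 < x' 0 : pick i with s i 0 ≤ x 0
    obtain ⟨i, hi⟩ := (hRR 0).1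
    refine ⟨i, key i x x' hxs hx's ?_⟩
    rw [abs_of_nonpos (by linarith), abs_of_nonpos (by linarith)]
    linarith
end

section
/- The max rule satisfies reinforcement: let M_j = max_i s_{i,j}, M'_j = max_i s'_{i,j}, and suppose M_j / Σ_k M_k = M'_j / Σ_k M'_k for all j (both denominators are positive since the s_i sum to 1). Then for the combined instance, max over all agents of the j-th coordinate, normalized, equals M_j / Σ_k M_k for all j. -/
theorem max_reinforcement (n n' m : ℕ) (hn : 0 < n) (hn' : 0 < n')
    (s : Fin n → Fin m → ℝ) (s' : Fin n' → Fin m → ℝ)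
    (hs : ∀ i, simplex (s i)) (hs' : ∀ i, simplex (s' i))
    (M M' : Fin m → ℝ)
    (hM : ∀ j, M j = Finset.univ.sup' (Finset.univ_nonempty_iff.mpr (Fin.pos_iff_nonempty.mp hn)) (fun i => s i j))
    (hM' : ∀ j, M' j = Finset.univ.sup' (Finset.univ_nonempty_iff.mpr (Fin.pos_iff_nonempty.mp hn')) (fun i => s' i j))
    (heq : ∀ j, M j / (∑ k, M k) = M' j / (∑ k, M' k)) :
    ∀ j, max (M j) (M' j) / (∑ k, max (M k) (M' k)) = M j / (∑ k, M k) := by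
  set S := ∑ k, M k with hS
  set S' := ∑ k, M' k with hS'
  have hle : ∀ j, s ⟨0, hn⟩ j ≤ M j := fun j => by
    rw [hM j]; exact Finset.le_sup' (fun i => s i j) (Finset.mem_univ _)
  have hle' : ∀ j, s' ⟨0, hn'⟩ j ≤ M' j := fun j => by
    rw [hM' j]; exact Finset.le_sup' (fun i => s' i j) (Finset.mem_univ _)
  have hSpos : 0 < S := by
    have : (1:ℝ) ≤ S := by
      rw [hS, ← (hs ⟨0, hn⟩).2]
      exact Finset.sum_le_sum fun j _ => hle j
    linarith
  have hS'pos : 0 < S' := by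
    have : (1:ℝ) ≤ S' := by
      rw [hS', ← (hs' ⟨0, hn'⟩).2]
      exact Finset.sum_le_sum fun j _ => hle' j
    linarith
  have hMnn : ∀ j, 0 ≤ M j := fun j =>
    le_trans ((hs ⟨0, hn⟩).1 j) (hle j)
  have hM'eq : ∀ j, M' j = (M j / S) * S' := fun j => by
    have := heq j
    field_simp at this ⊢
    linarith [this]
  have hmax : ∀ j, max (M j) (M' j) = (M j / S) * max S S' := fun j => by
    have h1 : max (M j) (M' j) = max ((M j / S) * S) ((M j / S) * S') := by
      rw [hM'eq j]; congr 1; field_simp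
    rw [h1]
    exact (mul_max_of_nonneg S S' (div_nonneg (hMnn j) hSpos.le)).symm
  have hsum : ∑ k, max (M k) (M' k) = max S S' := by
    simp_rw [hmax]
    rw [← Finset.sum_mul, ← Finset.sum_div, ← hS]
    field_simp
  intro j
  rw [hmax j, hsum, mul_div_assoc, div_self (by positivity), mul_one]
end

section
/- Participation lemma: let s_i, x, x' ∈ Δ^m and suppose that s_{i,j} ≥ x'_j for all j with x'_j > x_j. Then Σ_j |s_{i,j} − x'_j| ≤ Σ_j |s_{i,j} − x_j|, i.e., agent i weakly prefers x' to x under ℓ1 disutility. -/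
theorem participation_lemma (m : ℕ) (sᵢ x x' : Fin m → ℝ)
    (hsᵢ : simplex sᵢ) (hx : simplex x) (hx' : simplex x')
    (h : ∀ j, x j < x' j → x' j ≤ sᵢ j) :
    ∑ j, |sᵢ j - x' j| ≤ ∑ j, |sᵢ j - x j| := by
  have key : ∀ j, |sᵢ j - x' j| ≤ |sᵢ j - x j| + (x j - x' j) := by
    intro j
    by_cases hc : x j < x' j
    · have hs := h j hc
      rw [abs_of_nonneg (by linarith), abs_of_nonneg (by linarith : (0:ℝ) ≤ sᵢ j - x j)]
      linarith
    · push_neg at hc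
      calc |sᵢ j - x' j| = |(sᵢ j - x j) + (x j - x' j)| := by ring_nf
        _ ≤ |sᵢ j - x j| + |x j - x' j| := abs_add_le _ _
        _ = |sᵢ j - x j| + (x j - x' j) := by rw [abs_of_nonneg (sub_nonneg.2 hc)]
  calc ∑ j, |sᵢ j - x' j| ≤ ∑ j, (|sᵢ j - x j| + (x j - x' j)) :=
        Finset.sum_le_sum fun j _ => key j
    _ = ∑ j, |sᵢ j - x j| + (∑ j, x j - ∑ j, x' j) := by
        rw [Finset.sum_add_distrib, Finset.sum_sub_distrib]
    _ = ∑ j, |sᵢ j - x j| := by rw [hx.2, hx'.2]; ring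
end

section
/- With m = 3 candidates and any number of agents, the coordinate-wise median rule is range-respecting: if m_j = med_i s_{i,j} for j = 1,2,3 and M = m_1+m_2+m_3 > 0, then for every j, min_i s_{i,j} ≤ m_j/M ≤ max_i s_{i,j}. -/
noncomputable def med (l : List ℝ) : ℝ :=
  let srt := l.insertionSort (· ≤ ·)
  if l.length % 2 = 1 then srt.getD (l.length / 2) 0
  else (srt.getD (l.length / 2 - 1) 0 + srt.getD (l.length / 2) 0) / 2

lemma med_def (l : List ℝ) : med l =
    if l.length % 2 = 1 then (l.insertionSort (· ≤ ·)).getD (l.length / 2) 0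
    else ((l.insertionSort (· ≤ ·)).getD (l.length / 2 - 1) 0 +
      (l.insertionSort (· ≤ ·)).getD (l.length / 2) 0) / 2 := rfl

lemma countP_ofFn_card {n : ℕ} (y : Fin n → ℝ) (p : ℝ → Prop) [DecidablePred p] :
    (List.ofFn y).countP (fun x => decide (p x)) =
      (Finset.univ.filter (fun i => p (y i))).card := by
  calc (List.ofFn y).countP (fun x => decide (p x))
      = Multiset.countP (fun x => p x) (Multiset.map y Finset.univ.val) := by
        rw [Fin.univ_val_map]; rfl
    _ = (Finset.univ.filter (fun i => p (y i))).card := by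
        rw [Multiset.countP_map]
        rfl

lemma sorted_getElem_mono {l : List ℝ} (h : l.Pairwise (· ≤ ·)) {k j : ℕ} (hk : k ≤ j)
    (hj : j < l.length) : l[k]'(lt_of_le_of_lt hk hj) ≤ l[j] := by
  rcases eq_or_lt_of_le hk with rfl | h2
  · exact le_refl _
  · exact h.rel_get_of_lt (by exact h2)

lemma countP_ge_drop (l : List ℝ) (p : ℝ → Bool) (k : ℕ) (h : ∀ a ∈ l.drop k, p a) :
    l.length - k ≤ l.countP p := by
  have h2 : l.countP p = (l.take k).countP p + (l.drop k).countP p := by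
    rw [← List.countP_append, List.take_append_drop]
  have h3 : (l.drop k).countP p = (l.drop k).length := List.countP_eq_length.mpr h
  have h4 : (l.drop k).length = l.length - k := List.length_drop
  omega

lemma countP_ge_take (l : List ℝ) (p : ℝ → Bool) (k : ℕ) (hk : k ≤ l.length)
    (h : ∀ a ∈ l.take k, p a) : k ≤ l.countP p := by
  have h2 : l.countP p = (l.take k).countP p + (l.drop k).countP p := by
    rw [← List.countP_append, List.take_append_drop]
  have h3 : (l.take k).countP p = (l.take k).length := List.countP_eq_length.mpr h
  have h4 : (l.take k).length = min k l.length := List.length_take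
  omega

/-- at least `n - k` of the values are `≥` the `k`-th sorted value. -/
lemma card_ge_med {n k : ℕ} (hk : k < n) (y : Fin n → ℝ) :
    n - k ≤ (Finset.univ.filter
      (fun i => ((List.ofFn y).insertionSort (· ≤ ·)).getD k 0 ≤ y i)).card := by
  set l := List.ofFn y with hl
  set srt := l.insertionSort (· ≤ ·) with hsrt
  have hlen : srt.length = n := by
    rw [hsrt, List.length_insertionSort, hl, List.length_ofFn]
  have hsorted : srt.Pairwise (· ≤ ·) := List.pairwise_insertionSort _ l
  have hk' : k < srt.length := hlen ▸ hk
  rw [← countP_ofFn_card y (fun x => srt.getD k 0 ≤ x), ← hl]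
  have hperm : l.countP (fun x => decide (srt.getD k 0 ≤ x)) =
      srt.countP (fun x => decide (srt.getD k 0 ≤ x)) :=
    ((List.perm_insertionSort (· ≤ ·) l).countP_eq _).symm
  rw [hperm]
  have := countP_ge_drop srt (fun x => decide (srt.getD k 0 ≤ x)) k (by
    intro a ha
    obtain ⟨j, hj, rfl⟩ := List.mem_iff_getElem.mp ha
    rw [List.getElem_drop]
    have hkj : k + j < srt.length := by
      have := hj; rw [List.length_drop] at this; omega
    have := sorted_getElem_mono hsorted (Nat.le_add_right k j) hkj
    rw [List.getD_eq_getElem srt 0 hk']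
    simpa using this)
  omega

/-- at least `k + 1` of the values are `≤` the `k`-th sorted value. -/
lemma card_le_med {n k : ℕ} (hk : k < n) (y : Fin n → ℝ) :
    k + 1 ≤ (Finset.univ.filter
      (fun i => y i ≤ ((List.ofFn y).insertionSort (· ≤ ·)).getD k 0)).card := by
  set l := List.ofFn y with hl
  set srt := l.insertionSort (· ≤ ·) with hsrt
  have hlen : srt.length = n := by
    rw [hsrt, List.length_insertionSort, hl, List.length_ofFn]
  have hsorted : srt.Pairwise (· ≤ ·) := List.pairwise_insertionSort _ l
  have hk' : k < srt.length := hlen ▸ hk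
  rw [← countP_ofFn_card y (fun x => x ≤ srt.getD k 0), ← hl]
  have hperm : l.countP (fun x => decide (x ≤ srt.getD k 0)) =
      srt.countP (fun x => decide (x ≤ srt.getD k 0)) :=
    ((List.perm_insertionSort (· ≤ ·) l).countP_eq _).symm
  rw [hperm]
  exact countP_ge_take srt (fun x => decide (x ≤ srt.getD k 0)) (k+1) (by omega) (by
    intro a ha
    obtain ⟨j, hj, rfl⟩ := List.mem_iff_getElem.mp ha
    rw [List.getElem_take]
    have hjk : j ≤ k := by
      have := hj; rw [List.length_take] at this; omega
    have := sorted_getElem_mono hsorted hjk hk'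
    rw [List.getD_eq_getElem srt 0 hk']
    simpa using this)

lemma inter_nonempty_of_card {n : ℕ} (A B : Finset (Fin n)) (h : n < A.card + B.card) :
    (A ∩ B).Nonempty := by
  rw [← Finset.card_pos]
  have h1 := Finset.card_union_add_card_inter A B
  have h2 : (A ∪ B).card ≤ n := by
    have := Finset.card_le_univ (A ∪ B)
    simpa using this
  omega

/-- sum of medians is at most the max of the sums. -/
lemma med_add_le_sup {n : ℕ} (hn : 0 < n) (H : (Finset.univ : Finset (Fin n)).Nonempty)
    (y z : Fin n → ℝ) :
    med (List.ofFn y) + med (List.ofFn z) ≤ Finset.univ.sup' H (fun i => y i + z i) := by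
  have hky : (List.ofFn y).length = n := List.length_ofFn
  have hkz : (List.ofFn z).length = n := List.length_ofFn
  set k := n / 2 with hkdef
  have hk : k < n := Nat.div_lt_self hn (by norm_num)
  rw [med_def, med_def, hky, hkz, ← hkdef]
  rcases Nat.even_or_odd n with he | ho
  · have hmod0 : n % 2 = 0 := Nat.even_iff.mp he
    have hmod : ¬ (n % 2 = 1) := by omega
    have hk1 : 1 ≤ k := by omega
    have hkm : k - 1 < n := by omega
    rw [if_neg hmod, if_neg hmod]
    obtain ⟨i1, hi1⟩ := inter_nonempty_of_card
      (Finset.univ.filter (fun i => ((List.ofFn y).insertionSort (· ≤ ·)).getD (k-1) 0 ≤ y i))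
      (Finset.univ.filter (fun i => ((List.ofFn z).insertionSort (· ≤ ·)).getD k 0 ≤ z i))
      (by have h1 := card_ge_med hkm y; have h2 := card_ge_med hk z; omega)
    obtain ⟨i2, hi2⟩ := inter_nonempty_of_card
      (Finset.univ.filter (fun i => ((List.ofFn y).insertionSort (· ≤ ·)).getD k 0 ≤ y i))
      (Finset.univ.filter (fun i => ((List.ofFn z).insertionSort (· ≤ ·)).getD (k-1) 0 ≤ z i))
      (by have h1 := card_ge_med hk y; have h2 := card_ge_med hkm z; omega)
    rw [Finset.mem_inter, Finset.mem_filter, Finset.mem_filter] at hi1 hi2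
    have s1 : ((List.ofFn y).insertionSort (· ≤ ·)).getD (k-1) 0 +
        ((List.ofFn z).insertionSort (· ≤ ·)).getD k 0 ≤
        Finset.univ.sup' H (fun i => y i + z i) :=
      le_trans (add_le_add hi1.1.2 hi1.2.2)
        (Finset.le_sup' (fun i => y i + z i) (Finset.mem_univ i1))
    have s2 : ((List.ofFn y).insertionSort (· ≤ ·)).getD k 0 +
        ((List.ofFn z).insertionSort (· ≤ ·)).getD (k-1) 0 ≤
        Finset.univ.sup' H (fun i => y i + z i) :=
      le_trans (add_le_add hi2.1.2 hi2.2.2)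
        (Finset.le_sup' (fun i => y i + z i) (Finset.mem_univ i2))
    linarith
  · have hmod : n % 2 = 1 := Nat.odd_iff.mp ho
    rw [if_pos hmod, if_pos hmod]
    obtain ⟨i, hi⟩ := inter_nonempty_of_card
      (Finset.univ.filter (fun i => ((List.ofFn y).insertionSort (· ≤ ·)).getD k 0 ≤ y i))
      (Finset.univ.filter (fun i => ((List.ofFn z).insertionSort (· ≤ ·)).getD k 0 ≤ z i))
      (by have h1 := card_ge_med hk y; have h2 := card_ge_med hk z; omega)
    rw [Finset.mem_inter, Finset.mem_filter, Finset.mem_filter] at hi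
    exact le_trans (add_le_add hi.1.2 hi.2.2)
      (Finset.le_sup' (fun i => y i + z i) (Finset.mem_univ i))

/-- min of the sums is at most the sum of medians. -/
lemma inf_le_med_add {n : ℕ} (hn : 0 < n) (H : (Finset.univ : Finset (Fin n)).Nonempty)
    (y z : Fin n → ℝ) :
    Finset.univ.inf' H (fun i => y i + z i) ≤ med (List.ofFn y) + med (List.ofFn z) := by
  have hky : (List.ofFn y).length = n := List.length_ofFn
  have hkz : (List.ofFn z).length = n := List.length_ofFn
  set k := n / 2 with hkdef
  have hk : k < n := Nat.div_lt_self hn (by norm_num)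
  rw [med_def, med_def, hky, hkz, ← hkdef]
  rcases Nat.even_or_odd n with he | ho
  · have hmod0 : n % 2 = 0 := Nat.even_iff.mp he
    have hmod : ¬ (n % 2 = 1) := by omega
    have hk1 : 1 ≤ k := by omega
    have hkm : k - 1 < n := by omega
    rw [if_neg hmod, if_neg hmod]
    obtain ⟨i1, hi1⟩ := inter_nonempty_of_card
      (Finset.univ.filter (fun i => y i ≤ ((List.ofFn y).insertionSort (· ≤ ·)).getD k 0))
      (Finset.univ.filter (fun i => z i ≤ ((List.ofFn z).insertionSort (· ≤ ·)).getD (k-1) 0))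
      (by have h1 := card_le_med hk y; have h2 := card_le_med hkm z; omega)
    obtain ⟨i2, hi2⟩ := inter_nonempty_of_card
      (Finset.univ.filter (fun i => y i ≤ ((List.ofFn y).insertionSort (· ≤ ·)).getD (k-1) 0))
      (Finset.univ.filter (fun i => z i ≤ ((List.ofFn z).insertionSort (· ≤ ·)).getD k 0))
      (by have h1 := card_le_med hkm y; have h2 := card_le_med hk z; omega)
    rw [Finset.mem_inter, Finset.mem_filter, Finset.mem_filter] at hi1 hi2
    have s1 : Finset.univ.inf' H (fun i => y i + z i) ≤
        ((List.ofFn y).insertionSort (· ≤ ·)).getD k 0 +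
        ((List.ofFn z).insertionSort (· ≤ ·)).getD (k-1) 0 :=
      le_trans (Finset.inf'_le (fun i => y i + z i) (Finset.mem_univ i1))
        (add_le_add hi1.1.2 hi1.2.2)
    have s2 : Finset.univ.inf' H (fun i => y i + z i) ≤
        ((List.ofFn y).insertionSort (· ≤ ·)).getD (k-1) 0 +
        ((List.ofFn z).insertionSort (· ≤ ·)).getD k 0 :=
      le_trans (Finset.inf'_le (fun i => y i + z i) (Finset.mem_univ i2))
        (add_le_add hi2.1.2 hi2.2.2)
    linarith
  · have hmod : n % 2 = 1 := Nat.odd_iff.mp ho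
    rw [if_pos hmod, if_pos hmod]
    obtain ⟨i, hi⟩ := inter_nonempty_of_card
      (Finset.univ.filter (fun i => y i ≤ ((List.ofFn y).insertionSort (· ≤ ·)).getD k 0))
      (Finset.univ.filter (fun i => z i ≤ ((List.ofFn z).insertionSort (· ≤ ·)).getD k 0))
      (by have h1 := card_le_med hk y; have h2 := card_le_med hk z; omega)
    rw [Finset.mem_inter, Finset.mem_filter, Finset.mem_filter] at hi
    exact le_trans (Finset.inf'_le (fun i => y i + z i) (Finset.mem_univ i))
      (add_le_add hi.1.2 hi.2.2)

lemma getD_mem_range {n : ℕ} (H : (Finset.univ : Finset (Fin n)).Nonempty) {k : ℕ}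
    (hk : k < n) (y : Fin n → ℝ) :
    Finset.univ.inf' H y ≤ ((List.ofFn y).insertionSort (· ≤ ·)).getD k 0 ∧
    ((List.ofFn y).insertionSort (· ≤ ·)).getD k 0 ≤ Finset.univ.sup' H y := by
  set l := List.ofFn y with hl
  set srt := l.insertionSort (· ≤ ·) with hsrt
  have hlen : srt.length = n := by
    rw [hsrt, List.length_insertionSort, hl, List.length_ofFn]
  have hk' : k < srt.length := hlen ▸ hk
  have hmem : srt.getD k 0 ∈ srt := by
    rw [List.getD_eq_getElem srt 0 hk']
    exact List.getElem_mem hk'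
  have hmem' : srt.getD k 0 ∈ l := ((List.perm_insertionSort (· ≤ ·) l).mem_iff).mp hmem
  rw [hl, List.mem_ofFn] at hmem'
  obtain ⟨i, hi⟩ := hmem'
  constructor
  · exact hi ▸ Finset.inf'_le _ (Finset.mem_univ i)
  · exact hi ▸ Finset.le_sup' _ (Finset.mem_univ i)

lemma med_mem_range {n : ℕ} (hn : 0 < n) (H : (Finset.univ : Finset (Fin n)).Nonempty)
    (y : Fin n → ℝ) :
    Finset.univ.inf' H y ≤ med (List.ofFn y) ∧ med (List.ofFn y) ≤ Finset.univ.sup' H y := by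
  have hky : (List.ofFn y).length = n := List.length_ofFn
  have hk : n / 2 < n := Nat.div_lt_self hn (by norm_num)
  have hkm : n / 2 - 1 < n := by omega
  have h1 := getD_mem_range H hk y
  have h2 := getD_mem_range H hkm y
  rw [med_def, hky]
  split
  · exact h1
  · constructor
    · linarith [h1.1, h2.1]
    · linarith [h1.2, h2.2]

/-- Main helper lemma: for three nonnegative columns summing to one pointwise. -/
lemma key_lemma {n : ℕ} (hn : 0 < n) (H : (Finset.univ : Finset (Fin n)).Nonempty)
    (y z w : Fin n → ℝ) (hy : ∀ i, 0 ≤ y i) (hz : ∀ i, 0 ≤ z i) (hw : ∀ i, 0 ≤ w i)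
    (hsum : ∀ i, y i + z i + w i = 1)
    (hM : 0 < med (List.ofFn y) + med (List.ofFn z) + med (List.ofFn w)) :
    Finset.univ.inf' H y ≤
      med (List.ofFn y) / (med (List.ofFn y) + med (List.ofFn z) + med (List.ofFn w)) ∧
    med (List.ofFn y) / (med (List.ofFn y) + med (List.ofFn z) + med (List.ofFn w)) ≤
      Finset.univ.sup' H y := by
  set my := med (List.ofFn y)
  set mz := med (List.ofFn z)
  set mw := med (List.ofFn w)
  set a := Finset.univ.inf' H y with ha
  set b := Finset.univ.sup' H y with hb
  obtain ⟨ib, _, hib⟩ := Finset.exists_mem_eq_sup' H y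
  obtain ⟨ia, _, hia⟩ := Finset.exists_mem_eq_inf' H y
  have hb1 : b ≤ 1 := by
    rw [hb, hib]
    have := hsum ib; have := hz ib; have := hw ib; linarith
  have ha0 : 0 ≤ a := by rw [ha, hia]; exact hy ia
  have hab : a ≤ b := by
    rw [ha, hb, hia]
    exact Finset.le_sup' _ (Finset.mem_univ ia)
  have hmed := med_mem_range hn H y
  have hmy_lb : a ≤ my := hmed.1
  have hmy_ub : my ≤ b := hmed.2
  have h1 : 1 - b ≤ mz + mw := by
    refine le_trans ?_ (inf_le_med_add hn H z w)
    apply Finset.le_inf'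
    intro i _
    have h3 := hsum i
    have h4 : y i ≤ b := hb ▸ Finset.le_sup' _ (Finset.mem_univ i)
    linarith
  have h2 : mz + mw ≤ 1 - a := by
    refine le_trans (med_add_le_sup hn H z w) ?_
    apply Finset.sup'_le
    intro i _
    have h3 := hsum i
    have h4 : a ≤ y i := ha ▸ Finset.inf'_le _ (Finset.mem_univ i)
    linarith
  constructor
  · rw [le_div_iff₀ hM]
    nlinarith [mul_nonneg (sub_nonneg.2 (le_trans hab hb1)) (sub_nonneg.2 hmy_lb)]
  · rw [div_le_iff₀ hM]
    nlinarith [mul_nonneg (sub_nonneg.2 hb1) (sub_nonneg.2 hmy_ub),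
      mul_nonneg (le_trans ha0 hab) (sub_nonneg.2 hb1)]

theorem median_range_respecting_three_candidates (n : ℕ) (hn : 0 < n)
    (s : Fin n → Fin 3 → ℝ) (hs : ∀ i, simplex (s i))
    (mm : Fin 3 → ℝ)
    (hmm : ∀ j, mm j = med (List.ofFn (fun i => s i j)))
    (hM : 0 < mm 0 + mm 1 + mm 2) :
    ∀ j, (Finset.univ.inf' (Finset.univ_nonempty_iff.mpr (Fin.pos_iff_nonempty.mp hn)) (fun i => s i j))
            ≤ mm j / (mm 0 + mm 1 + mm 2) ∧
         mm j / (mm 0 + mm 1 + mm 2) ≤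
           (Finset.univ.sup' (Finset.univ_nonempty_iff.mpr (Fin.pos_iff_nonempty.mp hn)) (fun i => s i j)) := by
  have H : (Finset.univ : Finset (Fin n)).Nonempty :=
    Finset.univ_nonempty_iff.mpr (Fin.pos_iff_nonempty.mp hn)
  have hnn : ∀ i j, 0 ≤ s i j := fun i j => (hs i).1 j
  have hsum : ∀ i, s i 0 + s i 1 + s i 2 = 1 := by
    intro i
    have := (hs i).2
    rwa [Fin.sum_univ_three] at this
  intro j
  have hj : j = 0 ∨ j = 1 ∨ j = 2 := by fin_cases j <;> simp
  rcases hj with rfl | rfl | rfl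
  · have h := key_lemma hn H (fun i => s i 0) (fun i => s i 1) (fun i => s i 2)
      (fun i => hnn i 0) (fun i => hnn i 1) (fun i => hnn i 2) hsum
      (by rw [← hmm 0, ← hmm 1, ← hmm 2]; exact hM)
    rw [hmm 0, hmm 1, hmm 2]
    exact h
  · have hM' : 0 < med (List.ofFn (fun i => s i 1)) + med (List.ofFn (fun i => s i 0)) +
        med (List.ofFn (fun i => s i 2)) := by
      rw [← hmm 0, ← hmm 1, ← hmm 2]; linarith
    have h := key_lemma hn H (fun i => s i 1) (fun i => s i 0) (fun i => s i 2)
      (fun i => hnn i 1) (fun i => hnn i 0) (fun i => hnn i 2)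
      (fun i => by rw [← hsum i]; ring) hM'
    have heq : mm 0 + mm 1 + mm 2 = med (List.ofFn (fun i => s i 1)) +
        med (List.ofFn (fun i => s i 0)) + med (List.ofFn (fun i => s i 2)) := by
      rw [hmm 0, hmm 1, hmm 2]; ring
    rw [heq, hmm 1]
    exact h
  · have hM' : 0 < med (List.ofFn (fun i => s i 2)) + med (List.ofFn (fun i => s i 0)) +
        med (List.ofFn (fun i => s i 1)) := by
      rw [← hmm 0, ← hmm 1, ← hmm 2]; linarith
    have h := key_lemma hn H (fun i => s i 2) (fun i => s i 0) (fun i => s i 1)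
      (fun i => hnn i 2) (fun i => hnn i 0) (fun i => hnn i 1)
      (fun i => by rw [← hsum i]; ring) hM'
    have heq : mm 0 + mm 1 + mm 2 = med (List.ofFn (fun i => s i 2)) +
        med (List.ofFn (fun i => s i 0)) + med (List.ofFn (fun i => s i 1)) := by
      rw [hmm 0, hmm 1, hmm 2]; ring
    rw [heq, hmm 2]
    exact h
end
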